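/- BFS reordering bounds the matrix bandwidth by three consecutive level sizes: let φ be a level-consistent bijective numbering of the vertices by {0, …, N−1} (N = |n|), meaning dist_{G_A}(r,u) < dist_{G_A}(r,v) implies φ(u) < φ(v). Then for all vertices u ≠ v with A u v ≠ 0 and i = dist_{G_A}(r,u) ≥ 1, one has |φ(u) − φ(v)| < |L(i−1)| + |L(i)| + |L(i+1)|, where L(j) = {w : dist_{G_A}(r,w) = j}. -/

import Mathlib

open Matrix

/-- The adjacency graph `G_A` of a symmetric square matrix `A`:
vertices are the indices, and `u` is adjacent to `v` iff `u ≠ v` and `A u v ≠ 0`. -/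
def Matrix.adjGraph {R : Type*} [CommRing R] {n : Type*}
    (A : Matrix n n R) (hA : Aᵀ = A) : SimpleGraph n where
  Adj u v := u ≠ v ∧ A u v ≠ 0
  symm := by
    constructor
    intro u v h
    refine ⟨h.1.symm, fun hz => h.2 ?_⟩
    rw [← hA, Matrix.transpose_apply]
    exact hz
  loopless := ⟨fun u h => h.1 rfl⟩

/-- **BFS reordering bounds the matrix bandwidth by three consecutive level sizes.**
Let `A` be a symmetric square matrix with connected adjacency graph `G_A` rooted at `r`,
and let `φ` be a bijective numbering of the vertices by `{0, …, N-1}` (`N = |n|`) that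
is level-consistent: vertices at smaller BFS distance from `r` receive smaller numbers.
Then for all distinct vertices `u ≠ v` with `A u v ≠ 0` and `i = dist(r, u) ≥ 1`,
`|φ(u) - φ(v)| < |L(i-1)| + |L(i)| + |L(i+1)|`,
where `L j = {w : dist(r, w) = j}` are the BFS levels. -/
theorem bfs_numbering_bandwidth_bound
    {R : Type*} [CommRing R] {n : Type*} [Fintype n] [DecidableEq n]
    (A : Matrix n n R) (hA : Aᵀ = A)
    (hconn : (A.adjGraph hA).Connected) (r : n)
    (φ : n ≃ Fin (Fintype.card n))
    (hφ : ∀ u v : n, (A.adjGraph hA).dist r u < (A.adjGraph hA).dist r v →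
      (φ u : ℕ) < (φ v : ℕ))
    (u v : n) (huv : u ≠ v) (hAuv : A u v ≠ 0)
    (i : ℕ) (hi : (A.adjGraph hA).dist r u = i) (hi1 : 1 ≤ i) :
    |((φ u : ℕ) : ℤ) - ((φ v : ℕ) : ℤ)| <
      ({w : n | (A.adjGraph hA).dist r w = i - 1}.ncard : ℤ) +
      ({w : n | (A.adjGraph hA).dist r w = i}.ncard : ℤ) +
      ({w : n | (A.adjGraph hA).dist r w = i + 1}.ncard : ℤ) := by
  classical
  set G := A.adjGraph hA with hG
  have hadj : G.Adj u v := ⟨huv, hAuv⟩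
  have hd1 : G.dist u v ≤ 1 := by
    simpa using SimpleGraph.dist_le (hadj.toWalk)
  have hd1' : G.dist v u ≤ 1 := by rw [SimpleGraph.dist_comm]; exact hd1
  set d := G.dist r v with hd
  have hdle : d ≤ i + 1 := by
    have := hconn.dist_triangle (u := r) (v := u) (w := v)
    omega
  have hige : i ≤ d + 1 := by
    have := hconn.dist_triangle (u := r) (v := v) (w := u)
    omega
  set a := (φ u : ℕ) with ha
  set b := (φ v : ℕ) with hb
  -- key: vertices numbered between a and b have dist in [i-1, i+1]
  have hkey : ∀ w : n, min a b ≤ (φ w : ℕ) → (φ w : ℕ) ≤ max a b →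
      i - 1 ≤ G.dist r w ∧ G.dist r w ≤ i + 1 := by
    intro w h1 h2
    constructor
    · by_contra hcon
      push_neg at hcon
      have hwu : G.dist r w < G.dist r u := by omega
      have hwv : G.dist r w < G.dist r v := by omega
      have := hφ w u hwu
      have := hφ w v hwv
      omega
    · by_contra hcon
      push_neg at hcon
      have hwu : G.dist r u < G.dist r w := by omega
      have hwv : G.dist r v < G.dist r w := by omega
      have := hφ u w hwu
      have := hφ v w hwv
      omega
  set T : Finset n := Finset.univ.filter
    (fun w => min a b ≤ (φ w : ℕ) ∧ (φ w : ℕ) ≤ max a b) with hT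
  -- lower bound on T.card
  have hcard1 : max a b - min a b + 1 ≤ T.card := by
    have := Finset.card_le_card_of_injOn
      (f := fun k : ℕ => if h : k < Fintype.card n then φ.symm ⟨k, h⟩ else u)
      (s := Finset.Icc (min a b) (max a b)) (t := T)
      (by
        intro k hk
        simp only [Finset.coe_Icc, Set.mem_Icc] at hk
        have hkN : k < Fintype.card n := lt_of_le_of_lt hk.2 (by
          rcases max_cases a b with ⟨h, _⟩ | ⟨h, _⟩ <;> rw [h]
          · exact (φ u).isLt
          · exact (φ v).isLt)
        simp only [hT, Finset.mem_coe, Finset.mem_filter, Finset.mem_univ, true_and, dif_pos hkN,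
          Equiv.apply_symm_apply]
        exact hk)
      (by
        intro x hx y hy hxy
        simp only [Finset.coe_Icc, Set.mem_Icc] at hx hy
        have hxN : x < Fintype.card n := lt_of_le_of_lt hx.2 (by
          rcases max_cases a b with ⟨h, _⟩ | ⟨h, _⟩ <;> rw [h]
          · exact (φ u).isLt
          · exact (φ v).isLt)
        have hyN : y < Fintype.card n := lt_of_le_of_lt hy.2 (by
          rcases max_cases a b with ⟨h, _⟩ | ⟨h, _⟩ <;> rw [h]
          · exact (φ u).isLt
          · exact (φ v).isLt)
        simp only [dif_pos hxN, dif_pos hyN] at hxy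
        have := congrArg φ hxy
        simp only [Equiv.apply_symm_apply] at this
        exact congrArg Fin.val this)
    rw [Nat.card_Icc] at this
    have hmm : min a b ≤ max a b := min_le_max
    omega
  -- T is contained in the union of three levels
  have hsub : T ⊆ Finset.univ.filter (fun w => G.dist r w = i - 1) ∪
      Finset.univ.filter (fun w => G.dist r w = i) ∪
      Finset.univ.filter (fun w => G.dist r w = i + 1) := by
    intro w hw
    simp only [hT, Finset.mem_filter, Finset.mem_univ, true_and] at hw
    obtain ⟨h1, h2⟩ := hkey w hw.1 hw.2
    simp only [Finset.mem_union, Finset.mem_filter, Finset.mem_univ, true_and]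
    omega
  have hcard2 : T.card ≤
      (Finset.univ.filter (fun w => G.dist r w = i - 1)).card +
      (Finset.univ.filter (fun w => G.dist r w = i)).card +
      (Finset.univ.filter (fun w => G.dist r w = i + 1)).card := by
    calc T.card ≤ _ := Finset.card_le_card hsub
    _ ≤ _ := by
        refine le_trans (Finset.card_union_le _ _) ?_
        exact Nat.add_le_add_right (Finset.card_union_le _ _) _
  have hnc : ∀ j : ℕ, {w : n | G.dist r w = j}.ncard =
      (Finset.univ.filter (fun w => G.dist r w = j)).card := by
    intro j
    rw [Set.ncard_eq_toFinset_card']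
    congr 1
    ext w
    simp
  rw [abs_sub_lt_iff]
  rw [hnc (i-1), hnc i, hnc (i+1)]
  omega
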